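/- arXiv:1610.06726 — 5 statements merged into one kernel-verified Lean document; each statement's English description precedes it below -/
import Mathlib

section
/- Let X be a metric space and let α ∈ (0,1]. Let g : ℝ → ℝ be twice differentiable with g, g', g'' bounded, and let u, v : X → ℝ be bounded with finite Hölder seminorms [u]_{C^α}, [v]_{C^α}. Then there is a universal constant C (for instance C = 2 works) such that ‖g ∘ u − g ∘ v‖_{C^α} ≤ C ‖g‖_{C^2} (1 + ‖u‖_{C^α} + ‖v‖_{C^α}) ‖u − v‖_{C^α}. -/
open scoped ENNReal

/-- The sup norm `sup_x |f x|`, valued in `ℝ≥0∞`. -/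
noncomputable def supN {X : Type*} (f : X → ℝ) : ℝ≥0∞ :=
  ⨆ x, ENNReal.ofReal |f x|

/-- The Hölder seminorm `[f]_{C^α} = sup_{x ≠ y} |f x - f y| / d(x,y)^α`, valued in `ℝ≥0∞`. -/
noncomputable def hSemi {X : Type*} [MetricSpace X] (α : ℝ) (f : X → ℝ) : ℝ≥0∞ :=
  ⨆ (x : X) (y : X) (_ : x ≠ y), ENNReal.ofReal (|f x - f y| / dist x y ^ α)

/-- The Hölder norm `‖f‖_{C^α} = sup_x |f x| + [f]_{C^α}`. -/
noncomputable def hNorm {X : Type*} [MetricSpace X] (α : ℝ) (f : X → ℝ) : ℝ≥0∞ :=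
  supN f + hSemi α f

/-- The `C^2` norm of `g : ℝ → ℝ`: `sup |g| + sup |g'| + sup |g''|`. -/
noncomputable def c2Norm (g : ℝ → ℝ) : ℝ≥0∞ :=
  supN g + supN (deriv g) + supN (deriv (deriv g))

section helpers
variable {X : Type*} [MetricSpace X]

lemma le_supN {Y : Type*} (f : Y → ℝ) (x : Y) : ENNReal.ofReal |f x| ≤ supN f :=
  le_iSup (fun x => ENNReal.ofReal |f x|) x

lemma supN_le {Y : Type*} {f : Y → ℝ} {C : ℝ≥0∞} (h : ∀ x, ENNReal.ofReal |f x| ≤ C) :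
    supN f ≤ C := iSup_le h

lemma supN_bound {Y : Type*} {f : Y → ℝ} (h : supN f < ⊤) (x : Y) : |f x| ≤ (supN f).toReal := by
  have h2 := ENNReal.toReal_mono h.ne (le_supN f x)
  rwa [ENNReal.toReal_ofReal (abs_nonneg _)] at h2

lemma le_hSemi (α : ℝ) (f : X → ℝ) {x y : X} (h : x ≠ y) :
    ENNReal.ofReal (|f x - f y| / dist x y ^ α) ≤ hSemi α f :=
  le_iSup_of_le x (le_iSup_of_le y (le_iSup_of_le h le_rfl))

lemma hSemi_le {α : ℝ} {f : X → ℝ} {C : ℝ≥0∞}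
    (h : ∀ x y, x ≠ y → ENNReal.ofReal (|f x - f y| / dist x y ^ α) ≤ C) : hSemi α f ≤ C :=
  iSup_le fun x => iSup_le fun y => iSup_le fun hxy => h x y hxy

lemma hSemi_bound {α : ℝ} {f : X → ℝ} (h : hSemi α f < ⊤) {x y : X} (hxy : x ≠ y) :
    |f x - f y| ≤ (hSemi α f).toReal * dist x y ^ α := by
  have h2 := ENNReal.toReal_mono h.ne (le_hSemi α f hxy)
  have hd : (0:ℝ) < dist x y ^ α := by
    have := dist_pos.2 hxy
    positivity
  rw [ENNReal.toReal_ofReal (by positivity)] at h2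
  exact (div_le_iff₀ hd).mp h2

lemma lip_of_deriv {f : ℝ → ℝ} (hf : Differentiable ℝ f) {C : ℝ}
    (hC : ∀ t, |deriv f t| ≤ C) (p q : ℝ) : |f p - f q| ≤ C * |p - q| := by
  have := Convex.norm_image_sub_le_of_norm_deriv_le (s := Set.univ)
    (fun x _ => hf x) (fun x _ => by simpa [Real.norm_eq_abs] using hC x)
    convex_univ (Set.mem_univ q) (Set.mem_univ p)
  simpa [Real.norm_eq_abs] using this

lemma key_pt {g : ℝ → ℝ} (hg : Differentiable ℝ g) {M1 M2 : ℝ}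
    (h1 : ∀ t, |deriv g t| ≤ M1) (hg' : Differentiable ℝ (deriv g))
    (h2 : ∀ t, |deriv (deriv g) t| ≤ M2) (a b c d : ℝ) :
    |(g (a + b) - g a) - (g (c + d) - g c)| ≤ M1 * |b - d| + M2 * (|a - c| + |b - d|) * |d| := by
  set h : ℝ → ℝ := fun t => g (a + t * b) - g (c + t * d) with hh
  have hder : ∀ t : ℝ, HasDerivAt h (deriv g (a + t * b) * b - deriv g (c + t * d) * d) t := by
    intro t
    have l1 : HasDerivAt (fun t : ℝ => a + t * b) b t := by
      simpa using ((hasDerivAt_id t).mul_const b).const_add a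
    have l2 : HasDerivAt (fun t : ℝ => c + t * d) d t := by
      simpa using ((hasDerivAt_id t).mul_const d).const_add c
    have g1 : HasDerivAt (fun t : ℝ => g (a + t * b)) (deriv g (a + t * b) * b) t :=
      (hg _).hasDerivAt.comp t l1
    have g2 : HasDerivAt (fun t : ℝ => g (c + t * d)) (deriv g (c + t * d) * d) t :=
      (hg _).hasDerivAt.comp t l2
    exact g1.sub g2
  obtain ⟨τ, hτ, heq⟩ := exists_hasDerivAt_eq_slope h
    (fun t => deriv g (a + t * b) * b - deriv g (c + t * d) * d) one_pos
    (fun t _ => (hder t).continuousAt.continuousWithinAt) (fun t _ => hder t)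
  have hval : (g (a + b) - g a) - (g (c + d) - g c)
      = deriv g (a + τ * b) * b - deriv g (c + τ * d) * d := by
    rw [heq]; simp [hh]; ring
  rw [hval]
  set p := a + τ * b with hp
  set q := c + τ * d with hq
  have hre : deriv g p * b - deriv g q * d
      = deriv g p * (b - d) + (deriv g p - deriv g q) * d := by ring
  rw [hre]
  have e1 : |deriv g p * (b - d)| ≤ M1 * |b - d| := by
    rw [abs_mul]; exact mul_le_mul_of_nonneg_right (h1 p) (abs_nonneg _)
  have e2 : |deriv g p - deriv g q| ≤ M2 * |p - q| := lip_of_deriv hg' h2 p q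
  have hpq : |p - q| ≤ |a - c| + |b - d| := by
    have hpq' : p - q = (a - c) + τ * (b - d) := by rw [hp, hq]; ring
    rw [hpq']
    refine (abs_add_le _ _).trans (add_le_add_right ?_ _)
    rw [abs_mul]
    have hτ1 : |τ| ≤ 1 := by
      rw [abs_le]; constructor
      · linarith [hτ.1]
      · linarith [hτ.2]
    calc |τ| * |b - d| ≤ 1 * |b - d| := mul_le_mul_of_nonneg_right hτ1 (abs_nonneg _)
      _ = |b - d| := one_mul _
  have hM2 : 0 ≤ M2 := le_trans (abs_nonneg _) (h2 0)
  calc |deriv g p * (b - d) + (deriv g p - deriv g q) * d|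
      ≤ |deriv g p * (b - d)| + |(deriv g p - deriv g q) * d| := abs_add_le _ _
    _ ≤ M1 * |b - d| + M2 * (|a - c| + |b - d|) * |d| := by
        refine add_le_add e1 ?_
        rw [abs_mul]
        refine (mul_le_mul_of_nonneg_right e2 (abs_nonneg d)).trans ?_
        exact mul_le_mul_of_nonneg_right (mul_le_mul_of_nonneg_left hpq hM2) (abs_nonneg d)

end helpers

theorem stmt_1 {X : Type*} [MetricSpace X] (α : ℝ) (hα0 : 0 < α) (hα1 : α ≤ 1)
    (g : ℝ → ℝ) (hg : Differentiable ℝ g) (hg' : Differentiable ℝ (deriv g))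
    (hgb : supN g < ⊤) (hg'b : supN (deriv g) < ⊤) (hg''b : supN (deriv (deriv g)) < ⊤)
    (u v : X → ℝ) (hub : supN u < ⊤) (huh : hSemi α u < ⊤)
    (hvb : supN v < ⊤) (hvh : hSemi α v < ⊤) :
    hNorm α (fun x => g (u x) - g (v x)) ≤
      2 * c2Norm g * (1 + hNorm α u + hNorm α v) * hNorm α (fun x => u x - v x) := by
  set w : X → ℝ := fun x => u x - v x with hwdef
  -- finiteness of w norms
  have hwb : supN w ≤ supN u + supN v := by
    refine supN_le fun x => ?_
    have habs : |w x| ≤ |u x| + |v x| := abs_sub (u x) (v x)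
    calc ENNReal.ofReal |w x| ≤ ENNReal.ofReal (|u x| + |v x|) :=
          ENNReal.ofReal_le_ofReal habs
      _ = ENNReal.ofReal |u x| + ENNReal.ofReal |v x| :=
          ENNReal.ofReal_add (abs_nonneg _) (abs_nonneg _)
      _ ≤ supN u + supN v := add_le_add (le_supN u x) (le_supN v x)
  have hwh : hSemi α w ≤ hSemi α u + hSemi α v := by
    refine hSemi_le fun x y hxy => ?_
    have hd : (0:ℝ) < dist x y ^ α := by
      have := dist_pos.2 hxy
      positivity
    have habs : |w x - w y| ≤ |u x - u y| + |v x - v y| := by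
      have hrw : w x - w y = (u x - u y) - (v x - v y) := by simp only [hwdef]; ring
      rw [hrw]; exact abs_sub _ _
    calc ENNReal.ofReal (|w x - w y| / dist x y ^ α)
        ≤ ENNReal.ofReal (|u x - u y| / dist x y ^ α + |v x - v y| / dist x y ^ α) := by
          refine ENNReal.ofReal_le_ofReal ?_
          rw [← add_div]
          exact div_le_div_of_nonneg_right habs hd.le
      _ = ENNReal.ofReal (|u x - u y| / dist x y ^ α)
          + ENNReal.ofReal (|v x - v y| / dist x y ^ α) :=
          ENNReal.ofReal_add (by positivity) (by positivity)
      _ ≤ hSemi α u + hSemi α v := add_le_add (le_hSemi α u hxy) (le_hSemi α v hxy)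
  have hwb' : supN w < ⊤ := lt_of_le_of_lt hwb (ENNReal.add_lt_top.2 ⟨hub, hvb⟩)
  have hwh' : hSemi α w < ⊤ := lt_of_le_of_lt hwh (ENNReal.add_lt_top.2 ⟨huh, hvh⟩)
  -- real constants
  set M0 : ℝ := (supN g).toReal with hM0def
  set M1 : ℝ := (supN (deriv g)).toReal with hM1def
  set M2 : ℝ := (supN (deriv (deriv g))).toReal with hM2def
  set Bu : ℝ := (supN u).toReal with hBudef
  set Ku : ℝ := (hSemi α u).toReal with hKudef
  set Bv : ℝ := (supN v).toReal with hBvdef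
  set Kv : ℝ := (hSemi α v).toReal with hKvdef
  set Bw : ℝ := (supN w).toReal with hBwdef
  set Kw : ℝ := (hSemi α w).toReal with hKwdef
  have hM0nn : 0 ≤ M0 := ENNReal.toReal_nonneg
  have hM1nn : 0 ≤ M1 := ENNReal.toReal_nonneg
  have hM2nn : 0 ≤ M2 := ENNReal.toReal_nonneg
  have hBunn : 0 ≤ Bu := ENNReal.toReal_nonneg
  have hKunn : 0 ≤ Ku := ENNReal.toReal_nonneg
  have hBvnn : 0 ≤ Bv := ENNReal.toReal_nonneg
  have hKvnn : 0 ≤ Kv := ENNReal.toReal_nonneg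
  have hBwnn : 0 ≤ Bw := ENNReal.toReal_nonneg
  have hKwnn : 0 ≤ Kw := ENNReal.toReal_nonneg
  have hM1b : ∀ t, |deriv g t| ≤ M1 := fun t => supN_bound hg'b t
  have hM2b : ∀ t, |deriv (deriv g) t| ≤ M2 := fun t => supN_bound hg''b t
  have hBwb : ∀ x, |w x| ≤ Bw := fun x => supN_bound hwb' x
  have hKvb : ∀ x y : X, x ≠ y → |v x - v y| ≤ Kv * dist x y ^ α :=
    fun x y h => hSemi_bound hvh h
  have hKwb : ∀ x y : X, x ≠ y → |w x - w y| ≤ Kw * dist x y ^ α :=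
    fun x y h => hSemi_bound hwh' h
  -- comparison of real constants
  have hBwle : Bw ≤ Bu + Bv := by
    have := ENNReal.toReal_mono (ENNReal.add_lt_top.2 ⟨hub, hvb⟩).ne hwb
    rwa [ENNReal.toReal_add hub.ne hvb.ne] at this
  have hKwle : Kw ≤ Ku + Kv := by
    have := ENNReal.toReal_mono (ENNReal.add_lt_top.2 ⟨huh, hvh⟩).ne hwh
    rwa [ENNReal.toReal_add huh.ne hvh.ne] at this
  -- sup bound for F
  have sup_bound : supN (fun x => g (u x) - g (v x)) ≤ ENNReal.ofReal (M1 * Bw) := by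
    refine supN_le fun x => ENNReal.ofReal_le_ofReal ?_
    calc |g (u x) - g (v x)| ≤ M1 * |u x - v x| := lip_of_deriv hg hM1b (u x) (v x)
      _ ≤ M1 * Bw := mul_le_mul_of_nonneg_left (hBwb x) hM1nn
  -- seminorm bound for F
  have semi_bound : hSemi α (fun x => g (u x) - g (v x))
      ≤ ENNReal.ofReal (M1 * Kw + M2 * (Kv + Kw) * Bw) := by
    refine hSemi_le fun x y hxy => ENNReal.ofReal_le_ofReal ?_
    have hd : (0:ℝ) < dist x y ^ α := by
      have := dist_pos.2 hxy
      positivity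
    rw [div_le_iff₀ hd]
    have key := key_pt hg hM1b hg' hM2b (v x) (w x) (v y) (w y)
    have e1 : v x + w x = u x := by simp [hwdef]
    have e2 : v y + w y = u y := by simp [hwdef]
    rw [e1, e2] at key
    have b1 : |w x - w y| ≤ Kw * dist x y ^ α := hKwb x y hxy
    have b2 : |v x - v y| ≤ Kv * dist x y ^ α := hKvb x y hxy
    have b3 : |w y| ≤ Bw := hBwb y
    calc |(g (u x) - g (v x)) - (g (u y) - g (v y))|
        ≤ M1 * |w x - w y| + M2 * (|v x - v y| + |w x - w y|) * |w y| := key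
      _ ≤ M1 * (Kw * dist x y ^ α) + M2 * (Kv * dist x y ^ α + Kw * dist x y ^ α) * Bw := by
          refine add_le_add (mul_le_mul_of_nonneg_left b1 hM1nn) ?_
          refine mul_le_mul ?_ b3 (abs_nonneg _) ?_
          · exact mul_le_mul_of_nonneg_left (add_le_add b2 b1) hM2nn
          · exact mul_nonneg hM2nn (by positivity)
      _ = (M1 * Kw + M2 * (Kv + Kw) * Bw) * dist x y ^ α := by ring
  -- combine
  have lhs_le : hNorm α (fun x => g (u x) - g (v x))
      ≤ ENNReal.ofReal (M1 * Bw + (M1 * Kw + M2 * (Kv + Kw) * Bw)) := by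
    rw [hNorm, ENNReal.ofReal_add (mul_nonneg hM1nn hBwnn) (by positivity)]
    exact add_le_add sup_bound semi_bound
  -- real inequality
  have real_ineq : M1 * Bw + (M1 * Kw + M2 * (Kv + Kw) * Bw)
      ≤ 2 * (M0 + M1 + M2) * (1 + (Bu + Ku) + (Bv + Kv)) * (Bw + Kw) := by
    set G : ℝ := M0 + M1 + M2 with hG
    set S : ℝ := 1 + (Bu + Ku) + (Bv + Kv) with hS
    set W : ℝ := Bw + Kw with hW
    have hGnn : 0 ≤ G := by positivity
    have hWnn : 0 ≤ W := by positivity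
    have h₁ : 0 ≤ G * W * (2 * S - (1 + Kv + Kw)) := by
      refine mul_nonneg (mul_nonneg hGnn hWnn) ?_
      have : Kw ≤ Ku + Kv := hKwle
      rw [hS]; linarith
    have h₂ : 0 ≤ (G - M1) * W := by
      refine mul_nonneg ?_ hWnn
      rw [hG]; linarith
    have h₃ : 0 ≤ (Kv + Kw) * (G * W - M2 * Bw) := by
      refine mul_nonneg (by linarith) ?_
      have hBwW : Bw ≤ W := by rw [hW]; linarith
      have c1 : M2 * Bw ≤ M2 * W := mul_le_mul_of_nonneg_left hBwW hM2nn
      have c2 : M2 * W ≤ G * W := mul_le_mul_of_nonneg_right (by rw [hG]; linarith) hWnn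
      linarith
    nlinarith [h₁, h₂, h₃]
  -- rewrite the RHS as ofReal of a product
  have hc2 : c2Norm g = ENNReal.ofReal (M0 + M1 + M2) := by
    rw [c2Norm, ENNReal.ofReal_add (by positivity) hM2nn,
      ENNReal.ofReal_add hM0nn hM1nn, ENNReal.ofReal_toReal hgb.ne,
      ENNReal.ofReal_toReal hg'b.ne, ENNReal.ofReal_toReal hg''b.ne]
  have hnu : hNorm α u = ENNReal.ofReal (Bu + Ku) := by
    rw [hNorm, ENNReal.ofReal_add hBunn hKunn, ENNReal.ofReal_toReal hub.ne,
      ENNReal.ofReal_toReal huh.ne]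
  have hnv : hNorm α v = ENNReal.ofReal (Bv + Kv) := by
    rw [hNorm, ENNReal.ofReal_add hBvnn hKvnn, ENNReal.ofReal_toReal hvb.ne,
      ENNReal.ofReal_toReal hvh.ne]
  have hnw : hNorm α w = ENNReal.ofReal (Bw + Kw) := by
    rw [hNorm, ENNReal.ofReal_add hBwnn hKwnn, ENNReal.ofReal_toReal hwb'.ne,
      ENNReal.ofReal_toReal hwh'.ne]
  have hrhs : 2 * c2Norm g * (1 + hNorm α u + hNorm α v) * hNorm α w
      = ENNReal.ofReal (2 * (M0 + M1 + M2) * (1 + (Bu + Ku) + (Bv + Kv)) * (Bw + Kw)) := by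
    rw [hc2, hnu, hnv, hnw,
      show (2:ℝ≥0∞) = ENNReal.ofReal 2 by norm_num,
      show (1:ℝ≥0∞) = ENNReal.ofReal 1 by norm_num,
      ← ENNReal.ofReal_mul (by norm_num : (0:ℝ) ≤ 2),
      ← ENNReal.ofReal_add (by norm_num : (0:ℝ) ≤ 1) (add_nonneg hBunn hKunn),
      ← ENNReal.ofReal_add (by linarith : (0:ℝ) ≤ 1 + (Bu + Ku)) (add_nonneg hBvnn hKvnn),
      ← ENNReal.ofReal_mul (mul_nonneg (by norm_num : (0:ℝ) ≤ 2) (by linarith)),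
      ← ENNReal.ofReal_mul (mul_nonneg (mul_nonneg (by norm_num : (0:ℝ) ≤ 2) (by linarith))
        (by linarith))]
  calc hNorm α (fun x => g (u x) - g (v x))
      ≤ ENNReal.ofReal (M1 * Bw + (M1 * Kw + M2 * (Kv + Kw) * Bw)) := lhs_le
    _ ≤ ENNReal.ofReal (2 * (M0 + M1 + M2) * (1 + (Bu + Ku) + (Bv + Kv)) * (Bw + Kw)) :=
        ENNReal.ofReal_le_ofReal real_ineq
    _ = 2 * c2Norm g * (1 + hNorm α u + hNorm α v) * hNorm α w := hrhs.symm
end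

section
/- Let X be a metric space, let 0 < β ≤ α ≤ 1 and T ∈ (0,1]. Let g : ℝ → ℝ be differentiable with g and g' bounded, and let u : [0,T] × X → ℝ satisfy ‖u‖_{𝒞^α_T} < ∞. Then there is a constant C depending only on α and β such that ‖g ∘ u‖_{𝒞^β_T} ≤ C ( T^{(α−β)/2} ‖g‖_{C^1} (1 + ‖u‖_{𝒞^α_T}) + ‖g(u(0,·))‖_{C^β} ). -/
open scoped ENNReal

/-- The `C^1` norm of `g : ℝ → ℝ`: `sup |g| + sup |g'|`. -/
noncomputable def c1Norm (g : ℝ → ℝ) : ℝ≥0∞ :=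
  supN g + supN (deriv g)

/-- `‖u‖_{C_T C^α} = sup_{t ∈ [0,T]} ‖u(t,·)‖_{C^α}`. -/
noncomputable def pCTC {X : Type*} [MetricSpace X] (T α : ℝ) (u : ℝ → X → ℝ) : ℝ≥0∞ :=
  ⨆ t ∈ Set.Icc (0 : ℝ) T, hNorm α (u t)

/-- `‖u‖_{C_T^{α/2} L^∞} = sup_{s ≠ t ∈ [0,T]} sup_x |u(t,x) - u(s,x)| / |t-s|^{α/2}`. -/
noncomputable def pHold {X : Type*} (T α : ℝ) (u : ℝ → X → ℝ) : ℝ≥0∞ :=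
  ⨆ (s ∈ Set.Icc (0 : ℝ) T) (t ∈ Set.Icc (0 : ℝ) T) (_ : s ≠ t) (x : X),
    ENNReal.ofReal (|u t x - u s x| / |t - s| ^ (α / 2))

/-- The parabolic Hölder norm `‖u‖_{𝒞^α_T} = ‖u‖_{C_T C^α} + ‖u‖_{C_T^{α/2} L^∞}`. -/
noncomputable def pNorm {X : Type*} [MetricSpace X] (T α : ℝ) (u : ℝ → X → ℝ) : ℝ≥0∞ :=
  pCTC T α u + pHold T α u

private lemma real_le_toReal {r : ℝ} {S : ℝ≥0∞} (hS : S ≠ ⊤) (hr : 0 ≤ r)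
    (h : ENNReal.ofReal r ≤ S) : r ≤ S.toReal := by
  rw [← ENNReal.toReal_ofReal hr]; exact ENNReal.toReal_mono hS h

theorem stmt_2 (α β : ℝ) (hβ0 : 0 < β) (hβα : β ≤ α) (hα1 : α ≤ 1) :
    ∃ C : ℝ, 0 < C ∧
      ∀ (X : Type*) [MetricSpace X] (T : ℝ), 0 < T → T ≤ 1 →
        ∀ g : ℝ → ℝ, Differentiable ℝ g → supN g < ⊤ → supN (deriv g) < ⊤ →
          ∀ u : ℝ → X → ℝ, pNorm T α u < ⊤ →
            pNorm T β (fun t x => g (u t x)) ≤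
              ENNReal.ofReal C *
                (ENNReal.ofReal (T ^ ((α - β) / 2)) * c1Norm g * (1 + pNorm T α u)
                  + hNorm β (fun x => g (u 0 x))) := by
  refine ⟨5, by norm_num, ?_⟩
  intro X _ T hT0 hT1 g hg hgb hgb' u hu
  by_cases hHtop : hNorm β (fun x => g (u 0 x)) = ⊤
  · rw [hHtop]
    rw [add_top, ENNReal.mul_top (by norm_num)]
    exact le_top
  -- abbreviations
  have hα0 : (0 : ℝ) < α := lt_of_lt_of_le hβ0 hβα
  have hab : (0 : ℝ) ≤ α - β := by linarith
  set P : ℝ := (pNorm T α u).toReal with hPdef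
  set M : ℝ := (supN (deriv g)).toReal with hMdef
  set H : ℝ := (hNorm β (fun x => g (u 0 x))).toReal with hHdef
  set Tp : ℝ := T ^ ((α - β) / 2) with hTpdef
  have hP0 : 0 ≤ P := ENNReal.toReal_nonneg
  have hM0 : 0 ≤ M := ENNReal.toReal_nonneg
  have hH0 : 0 ≤ H := ENNReal.toReal_nonneg
  have hTp0 : 0 ≤ Tp := Real.rpow_nonneg hT0.le _
  have hufin : pNorm T α u ≠ ⊤ := hu.ne
  have hpCTC_le : pCTC T α u ≤ pNorm T α u := self_le_add_right _ _
  have hpHold_le : pHold T α u ≤ pNorm T α u := self_le_add_left _ _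
  have h0mem : (0 : ℝ) ∈ Set.Icc (0 : ℝ) T := ⟨le_refl _, hT0.le⟩
  -- g is Lipschitz with constant M
  have hMx : ∀ x, |deriv g x| ≤ M := by
    intro x
    refine real_le_toReal hgb'.ne (abs_nonneg _) ?_
    exact le_iSup (fun y => ENNReal.ofReal |deriv g y|) x
  have hLip : ∀ a b : ℝ, |g a - g b| ≤ M * |a - b| := by
    have hl : LipschitzWith M.toNNReal g := by
      refine lipschitzWith_of_nnnorm_deriv_le hg ?_
      intro x
      rw [← NNReal.coe_le_coe, coe_nnnorm, Real.coe_toNNReal _ hM0, Real.norm_eq_abs]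
      exact hMx x
    intro a b
    have := hl.dist_le_mul a b
    rwa [Real.dist_eq, Real.dist_eq, Real.coe_toNNReal _ hM0] at this
  -- extraction: spatial Hölder bound on u
  have F1 : ∀ t ∈ Set.Icc (0 : ℝ) T, ∀ x y : X, x ≠ y →
      |u t x - u t y| ≤ P * dist x y ^ α := by
    intro t ht x y hxy
    have hd : (0 : ℝ) < dist x y := dist_pos.mpr hxy
    have h1 : ENNReal.ofReal (|u t x - u t y| / dist x y ^ α) ≤ hSemi α (u t) := by
      simp only [hSemi]
      exact le_iSup_of_le x (le_iSup_of_le y (le_iSup_of_le hxy le_rfl))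
    have h2 : hSemi α (u t) ≤ pNorm T α u := by
      refine le_trans ?_ hpCTC_le
      have step1 : hSemi α (u t) ≤ hNorm α (u t) := self_le_add_left _ (supN (u t))
      refine le_trans step1 ?_
      simp only [pCTC]
      exact le_iSup_of_le t (le_iSup_of_le ht le_rfl)
    have h3 : |u t x - u t y| / dist x y ^ α ≤ P :=
      real_le_toReal hufin (by positivity) (h1.trans h2)
    calc |u t x - u t y| = |u t x - u t y| / dist x y ^ α * dist x y ^ α := by
          field_simp
      _ ≤ P * dist x y ^ α := by
          exact mul_le_mul_of_nonneg_right h3 (Real.rpow_nonneg hd.le _)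
  -- extraction: time Hölder bound on u
  have F2 : ∀ s ∈ Set.Icc (0 : ℝ) T, ∀ t ∈ Set.Icc (0 : ℝ) T, ∀ x : X,
      |u t x - u s x| ≤ P * |t - s| ^ (α / 2) := by
    intro s hs t ht x
    rcases eq_or_ne s t with rfl | hst
    · simp only [sub_self, abs_zero]
      positivity
    · have hts : (0 : ℝ) < |t - s| := abs_pos.mpr (sub_ne_zero.mpr (Ne.symm hst))
      have h1 : ENNReal.ofReal (|u t x - u s x| / |t - s| ^ (α / 2)) ≤ pHold T α u := by
        simp only [pHold]
        exact le_iSup_of_le s (le_iSup_of_le hs (le_iSup_of_le t (le_iSup_of_le ht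
          (le_iSup_of_le hst (le_iSup_of_le x le_rfl)))))
      have h3 : |u t x - u s x| / |t - s| ^ (α / 2) ≤ P :=
        real_le_toReal hufin (by positivity) (h1.trans hpHold_le)
      calc |u t x - u s x| = |u t x - u s x| / |t - s| ^ (α / 2) * |t - s| ^ (α / 2) := by
            field_simp
        _ ≤ P * |t - s| ^ (α / 2) := by
            exact mul_le_mul_of_nonneg_right h3 (Real.rpow_nonneg hts.le _)
  -- extraction: bounds from H (time 0)
  have h0sup : ∀ x : X, |g (u 0 x)| ≤ H := by
    intro x
    refine real_le_toReal hHtop (abs_nonneg _) ?_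
    refine le_trans ?_ (self_le_add_right _ _)
    exact le_iSup (fun y => ENNReal.ofReal |g (u 0 y)|) x
  have h0semi : ∀ x y : X, x ≠ y → |g (u 0 x) - g (u 0 y)| ≤ H * dist x y ^ β := by
    intro x y hxy
    have hd : (0 : ℝ) < dist x y := dist_pos.mpr hxy
    have h1 : ENNReal.ofReal (|g (u 0 x) - g (u 0 y)| / dist x y ^ β) ≤
        hNorm β (fun z => g (u 0 z)) := by
      refine le_trans ?_ (self_le_add_left _ _)
      simp only [hSemi]
      exact le_iSup_of_le x (le_iSup_of_le y (le_iSup_of_le hxy le_rfl))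
    have h3 : |g (u 0 x) - g (u 0 y)| / dist x y ^ β ≤ H :=
      real_le_toReal hHtop (by positivity) h1
    calc |g (u 0 x) - g (u 0 y)|
        = |g (u 0 x) - g (u 0 y)| / dist x y ^ β * dist x y ^ β := by field_simp
      _ ≤ H * dist x y ^ β := mul_le_mul_of_nonneg_right h3 (Real.rpow_nonneg hd.le _)
  -- rpow facts
  have hTa2 : T ^ (α / 2) ≤ Tp :=
    Real.rpow_le_rpow_of_exponent_ge hT0 hT1 (by linarith)
  -- time increment of g ∘ u, bounded by M * P * T^(α/2)
  have Ginc : ∀ t ∈ Set.Icc (0 : ℝ) T, ∀ x : X,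
      |g (u t x) - g (u 0 x)| ≤ M * (P * T ^ (α / 2)) := by
    intro t ht x
    calc |g (u t x) - g (u 0 x)| ≤ M * |u t x - u 0 x| := hLip _ _
      _ ≤ M * (P * |t - 0| ^ (α / 2)) := mul_le_mul_of_nonneg_left (F2 0 h0mem t ht x) hM0
      _ ≤ M * (P * T ^ (α / 2)) := by
          have h1 : |t - 0| ^ (α / 2) ≤ T ^ (α / 2) := by
            rw [sub_zero, abs_of_nonneg ht.1]
            exact Real.rpow_le_rpow ht.1 ht.2 (by positivity)
          exact mul_le_mul_of_nonneg_left (mul_le_mul_of_nonneg_left h1 hP0) hM0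
  -- B1 : sup bound
  have B1 : ∀ t ∈ Set.Icc (0 : ℝ) T, ∀ x : X, |g (u t x)| ≤ H + M * (P * Tp) := by
    intro t ht x
    have e := abs_sub_abs_le_abs_sub (g (u t x)) (g (u 0 x))
    have h1 := h0sup x
    have h2 := Ginc t ht x
    nlinarith [mul_le_mul_of_nonneg_left hTa2 (mul_nonneg hM0 hP0)]
  -- B2 : spatial seminorm bound
  have B2 : ∀ t ∈ Set.Icc (0 : ℝ) T, ∀ x y : X, x ≠ y →
      |g (u t x) - g (u t y)| / dist x y ^ β ≤ H + 3 * (M * (P * Tp)) := by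
    intro t ht x y hxy
    have hd : (0 : ℝ) < dist x y := dist_pos.mpr hxy
    have hX0 : 0 ≤ M * (P * Tp) := by positivity
    rcases le_or_gt (dist x y) (T ^ ((1 : ℝ) / 2)) with hcase | hcase
    · -- small distance
      have h1 : |g (u t x) - g (u t y)| ≤ M * (P * dist x y ^ α) :=
        (hLip _ _).trans (mul_le_mul_of_nonneg_left (F1 t ht x y hxy) hM0)
      have key : |g (u t x) - g (u t y)| / dist x y ^ β ≤ M * (P * Tp) := by
        have hdb : (0 : ℝ) < dist x y ^ β := Real.rpow_pos_of_pos hd _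
        calc |g (u t x) - g (u t y)| / dist x y ^ β
            ≤ M * (P * dist x y ^ α) / dist x y ^ β := (div_le_div_iff_of_pos_right hdb).mpr h1
          _ = M * (P * (dist x y ^ α / dist x y ^ β)) := by ring
          _ = M * (P * dist x y ^ (α - β)) := by rw [← Real.rpow_sub hd]
          _ ≤ M * (P * (T ^ ((1 : ℝ) / 2)) ^ (α - β)) := by
              exact mul_le_mul_of_nonneg_left (mul_le_mul_of_nonneg_left
                (Real.rpow_le_rpow dist_nonneg hcase hab) hP0) hM0
          _ = M * (P * Tp) := by
              rw [← Real.rpow_mul hT0.le, show (1 : ℝ) / 2 * (α - β) = (α - β) / 2 by ring]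
      linarith
    · -- large distance
      have hTb : T ^ (β / 2) ≤ dist x y ^ β := by
        have : (T ^ ((1 : ℝ) / 2)) ^ β ≤ dist x y ^ β :=
          Real.rpow_le_rpow (Real.rpow_nonneg hT0.le _) hcase.le hβ0.le
        rwa [← Real.rpow_mul hT0.le, show (1 : ℝ) / 2 * β = β / 2 by ring] at this
      have hTb0 : (0 : ℝ) < T ^ (β / 2) := Real.rpow_pos_of_pos hT0 _
      have hΔ : |g (u t x) - g (u t y)| ≤
          H * dist x y ^ β + 2 * (M * (P * T ^ (α / 2))) := by
        have e : g (u t x) - g (u t y) =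
            (g (u 0 x) - g (u 0 y)) + ((g (u t x) - g (u 0 x)) - (g (u t y) - g (u 0 y))) := by
          ring
        calc |g (u t x) - g (u t y)|
            ≤ |g (u 0 x) - g (u 0 y)| + |(g (u t x) - g (u 0 x)) - (g (u t y) - g (u 0 y))| := by
              rw [e]; exact abs_add_le _ _
          _ ≤ |g (u 0 x) - g (u 0 y)| + (|g (u t x) - g (u 0 x)| + |g (u t y) - g (u 0 y)|) :=
              add_le_add le_rfl (abs_sub _ _)
          _ ≤ H * dist x y ^ β + 2 * (M * (P * T ^ (α / 2))) := by
              have := Ginc t ht x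
              have := Ginc t ht y
              have := h0semi x y hxy
              linarith
      have hdb : (0 : ℝ) < dist x y ^ β := Real.rpow_pos_of_pos hd _
      calc |g (u t x) - g (u t y)| / dist x y ^ β
          ≤ (H * dist x y ^ β + 2 * (M * (P * T ^ (α / 2)))) / dist x y ^ β :=
            (div_le_div_iff_of_pos_right hdb).mpr hΔ
        _ = H + 2 * (M * P) * (T ^ (α / 2) / dist x y ^ β) := by field_simp
        _ ≤ H + 2 * (M * P) * (T ^ (α / 2) / T ^ (β / 2)) := by
            have hmono : T ^ (α / 2) / dist x y ^ β ≤ T ^ (α / 2) / T ^ (β / 2) :=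
              (div_le_div_iff_of_pos_left (Real.rpow_pos_of_pos hT0 _) hdb hTb0).mpr hTb
            nlinarith [mul_le_mul_of_nonneg_left hmono (by positivity : (0:ℝ) ≤ 2 * (M * P))]
        _ = H + 2 * (M * P) * Tp := by
            rw [← Real.rpow_sub hT0, show α / 2 - β / 2 = (α - β) / 2 by ring]
        _ ≤ H + 3 * (M * (P * Tp)) := by nlinarith
  -- B3 : time seminorm bound
  have B3 : ∀ s ∈ Set.Icc (0 : ℝ) T, ∀ t ∈ Set.Icc (0 : ℝ) T, s ≠ t → ∀ x : X,
      |g (u t x) - g (u s x)| / |t - s| ^ (β / 2) ≤ M * (P * Tp) := by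
    intro s hs t ht hst x
    have hts : (0 : ℝ) < |t - s| := abs_pos.mpr (sub_ne_zero.mpr (Ne.symm hst))
    have htsT : |t - s| ≤ T := by
      rw [abs_sub_le_iff]; constructor <;> [linarith [ht.2, hs.1]; linarith [hs.2, ht.1]]
    have h1 : |g (u t x) - g (u s x)| ≤ M * (P * |t - s| ^ (α / 2)) :=
      (hLip _ _).trans (mul_le_mul_of_nonneg_left (F2 s hs t ht x) hM0)
    have hb : (0 : ℝ) < |t - s| ^ (β / 2) := Real.rpow_pos_of_pos hts _
    calc |g (u t x) - g (u s x)| / |t - s| ^ (β / 2)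
        ≤ M * (P * |t - s| ^ (α / 2)) / |t - s| ^ (β / 2) := (div_le_div_iff_of_pos_right hb).mpr h1
      _ = M * (P * (|t - s| ^ (α / 2) / |t - s| ^ (β / 2))) := by ring
      _ = M * (P * |t - s| ^ (α / 2 - β / 2)) := by rw [← Real.rpow_sub hts]
      _ ≤ M * (P * T ^ (α / 2 - β / 2)) := by
          exact mul_le_mul_of_nonneg_left (mul_le_mul_of_nonneg_left
            (Real.rpow_le_rpow hts.le htsT (by linarith)) hP0) hM0
      _ = M * (P * Tp) := by rw [show α / 2 - β / 2 = (α - β) / 2 by ring]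
  -- assemble ENNReal bound on the LHS
  have LHS : pNorm T β (fun t x => g (u t x)) ≤
      ENNReal.ofReal (2 * H + 5 * (M * (P * Tp))) := by
    have hX0 : 0 ≤ M * (P * Tp) := by positivity
    have hCTC : pCTC T β (fun t x => g (u t x)) ≤
        ENNReal.ofReal (2 * H + 4 * (M * (P * Tp))) := by
      simp only [pCTC]
      refine iSup_le fun t => iSup_le fun ht => ?_
      have hsup : supN (fun x => g (u t x)) ≤ ENNReal.ofReal (H + M * (P * Tp)) :=
        iSup_le fun x => ENNReal.ofReal_le_ofReal (B1 t ht x)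
      have hsemi : hSemi β (fun x => g (u t x)) ≤
          ENNReal.ofReal (H + 3 * (M * (P * Tp))) :=
        iSup_le fun x => iSup_le fun y => iSup_le fun hxy =>
          ENNReal.ofReal_le_ofReal (B2 t ht x y hxy)
      calc hNorm β (fun x => g (u t x))
          ≤ ENNReal.ofReal (H + M * (P * Tp)) + ENNReal.ofReal (H + 3 * (M * (P * Tp))) :=
            add_le_add hsup hsemi
        _ = ENNReal.ofReal (2 * H + 4 * (M * (P * Tp))) := by
            rw [← ENNReal.ofReal_add (by positivity) (by positivity)]
            ring_nf
    have hHold : pHold T β (fun t x => g (u t x)) ≤ ENNReal.ofReal (M * (P * Tp)) := by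
      simp only [pHold]
      refine iSup_le fun s => iSup_le fun hs => iSup_le fun t => iSup_le fun ht =>
        iSup_le fun hst => iSup_le fun x => ?_
      exact ENNReal.ofReal_le_ofReal (B3 s hs t ht hst x)
    calc pNorm T β (fun t x => g (u t x))
        = pCTC T β (fun t x => g (u t x)) + pHold T β (fun t x => g (u t x)) := rfl
      _ ≤ ENNReal.ofReal (2 * H + 4 * (M * (P * Tp))) + ENNReal.ofReal (M * (P * Tp)) :=
          add_le_add hCTC hHold
      _ = ENNReal.ofReal (2 * H + 5 * (M * (P * Tp))) := by
          rw [← ENNReal.ofReal_add (by positivity) (by positivity)]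
          ring_nf
  -- assemble the RHS bound
  have RHS : ENNReal.ofReal (2 * H + 5 * (M * (P * Tp))) ≤
      ENNReal.ofReal 5 *
        (ENNReal.ofReal Tp * c1Norm g * (1 + pNorm T α u)
          + hNorm β (fun x => g (u 0 x))) := by
    have e1 : ENNReal.ofReal (2 * H + 5 * (M * (P * Tp))) ≤
        ENNReal.ofReal (5 * (Tp * M * P + H)) := by
      apply ENNReal.ofReal_le_ofReal
      nlinarith
    refine e1.trans ?_
    have e2 : ENNReal.ofReal (5 * (Tp * M * P + H)) =
        ENNReal.ofReal 5 *
          (ENNReal.ofReal Tp * supN (deriv g) * pNorm T α u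
            + hNorm β (fun x => g (u 0 x))) := by
      rw [ENNReal.ofReal_mul (by norm_num), ENNReal.ofReal_add (by positivity) hH0,
        ENNReal.ofReal_mul (by positivity), ENNReal.ofReal_mul hTp0,
        hMdef, hPdef, hHdef, ENNReal.ofReal_toReal hgb'.ne, ENNReal.ofReal_toReal hufin,
        ENNReal.ofReal_toReal hHtop]
    rw [e2]
    gcongr
    · exact self_le_add_left _ _
    · exact self_le_add_left _ _
  exact LHS.trans RHS
end

section
/- Let X be a metric space, let 0 < β ≤ α ≤ 1 and T ∈ (0,1]. Let g : ℝ → ℝ be twice differentiable with g, g', g'' bounded, and let u, v : [0,T] × X → ℝ satisfy ‖u‖_{𝒞^α_T} < ∞, ‖v‖_{𝒞^α_T} < ∞ and u(0,·) = v(0,·). Then there is a constant C depending only on α and β such that ‖g ∘ u − g ∘ v‖_{𝒞^β_T} ≤ C T^{(α−β)/2} ‖g‖_{C^2} (1 + ‖u‖_{𝒞^α_T} + ‖v‖_{𝒞^α_T}) ‖u − v‖_{𝒞^α_T}. -/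
open scoped ENNReal

lemma lipR {f : ℝ → ℝ} {K : ℝ} (hf : Differentiable ℝ f) (hK : ∀ z, |deriv f z| ≤ K)
    (a b : ℝ) : |f a - f b| ≤ K * |a - b| := by
  have := Convex.norm_image_sub_le_of_norm_deriv_le (s := Set.univ)
    (fun x _ => hf x) (fun x _ => by rw [Real.norm_eq_abs]; exact hK x) convex_univ
    (Set.mem_univ b) (Set.mem_univ a)
  simpa [Real.norm_eq_abs] using this

lemma key_est {g : ℝ → ℝ} {K : ℝ} (hg : Differentiable ℝ g) (hg' : Differentiable ℝ (deriv g))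
    (hK1 : ∀ z, |deriv g z| ≤ K) (hK2 : ∀ z, |deriv (deriv g) z| ≤ K) (a b c d : ℝ) :
    |(g a - g b) - (g c - g d)| ≤ K * |(a - b) - (c - d)| + K * ((|a - b| + |c - d|) * |b - d|) := by
  have hK0 : 0 ≤ K := le_trans (abs_nonneg _) (hK1 0)
  set h : ℝ → ℝ := fun θ => g (c + θ * (a - c)) - g (d + θ * (b - d)) with hh
  set h' : ℝ → ℝ := fun θ => deriv g (c + θ * (a - c)) * (a - c) - deriv g (d + θ * (b - d)) * (b - d) with hh'
  have hder : ∀ θ : ℝ, HasDerivAt h (h' θ) θ := by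
    intro θ
    have H1 : HasDerivAt (fun θ : ℝ => c + θ * (a - c)) (a - c) θ := by
      simpa using ((hasDerivAt_id θ).mul_const (a - c)).const_add c
    have H2 : HasDerivAt (fun θ : ℝ => d + θ * (b - d)) (b - d) θ := by
      simpa using ((hasDerivAt_id θ).mul_const (b - d)).const_add d
    have G1 := (hg (c + θ * (a - c))).hasDerivAt.comp θ H1
    have G2 := (hg (d + θ * (b - d))).hasDerivAt.comp θ H2
    exact G1.sub G2
  have bound : ∀ θ ∈ Set.Icc (0:ℝ) 1, |h' θ| ≤ K * |(a - b) - (c - d)| + K * ((|a - b| + |c - d|) * |b - d|) := by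
    intro θ hθ
    obtain ⟨hθ0, hθ1⟩ := hθ
    set p := c + θ * (a - c)
    set q := d + θ * (b - d)
    have hpq : |p - q| ≤ |a - b| + |c - d| := by
      have : p - q = (1 - θ) * (c - d) + θ * (a - b) := by simp only [p, q]; ring
      rw [this]
      calc |(1 - θ) * (c - d) + θ * (a - b)| ≤ |(1-θ)*(c-d)| + |θ*(a-b)| := abs_add_le _ _
        _ = (1-θ)*|c-d| + θ*|a-b| := by
            rw [abs_mul, abs_mul, abs_of_nonneg (by linarith), abs_of_nonneg hθ0]
        _ ≤ |a - b| + |c - d| := by nlinarith [abs_nonneg (c - d), abs_nonneg (a - b)]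
    have hgl : |deriv g p - deriv g q| ≤ K * |p - q| := lipR hg' hK2 p q
    have hrw : h' θ = deriv g p * ((a - b) - (c - d)) + (deriv g p - deriv g q) * (b - d) := by
      simp only [hh', p, q]; ring
    rw [hrw]
    calc |deriv g p * ((a - b) - (c - d)) + (deriv g p - deriv g q) * (b - d)|
        ≤ |deriv g p| * |(a-b)-(c-d)| + |deriv g p - deriv g q| * |b - d| := by
          refine (abs_add_le _ _).trans ?_; rw [abs_mul, abs_mul]
      _ ≤ K * |(a-b)-(c-d)| + (K * (|a-b|+|c-d|)) * |b-d| := by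
          gcongr
          · exact hK1 p
          · exact hgl.trans (by nlinarith [abs_nonneg (b - d)])
      _ = K * |(a - b) - (c - d)| + K * ((|a - b| + |c - d|) * |b - d|) := by ring
  have := norm_image_sub_le_of_norm_deriv_le_segment_01'
    (f := h) (f' := h') (fun θ hθ => (hder θ).hasDerivWithinAt)
    (fun θ hθ => by simpa [Real.norm_eq_abs] using bound θ (Set.mem_Icc.2 ⟨hθ.1, hθ.2.le⟩))
  have h1 : h 1 = g a - g b := by simp [hh]
  have h0 : h 0 = g c - g d := by simp [hh]
  rw [h1, h0] at this
  simpa [Real.norm_eq_abs] using this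

section extract
variable {X : Type*} [MetricSpace X] {T α : ℝ} {f : ℝ → X → ℝ}

lemma le_toReal_of_ofReal_le {S : ℝ≥0∞} {r : ℝ} (hr : 0 ≤ r) (h : ENNReal.ofReal r ≤ S)
    (hS : S ≠ ⊤) : r ≤ S.toReal := by
  have := ENNReal.toReal_mono hS h
  rwa [ENNReal.toReal_ofReal hr] at this

lemma le_pNorm_sup {t : ℝ} (ht : t ∈ Set.Icc (0:ℝ) T) (x : X) :
    ENNReal.ofReal |f t x| ≤ pNorm T α f :=
  calc ENNReal.ofReal |f t x| ≤ supN (f t) := le_iSup (fun x => ENNReal.ofReal |f t x|) x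
    _ ≤ hNorm α (f t) := le_self_add
    _ ≤ pCTC T α f := le_iSup₂ (f := fun t (_ : t ∈ Set.Icc (0:ℝ) T) => hNorm α (f t)) t ht
    _ ≤ pNorm T α f := le_self_add

lemma le_pNorm_space {t : ℝ} (ht : t ∈ Set.Icc (0:ℝ) T) {x y : X} (hxy : x ≠ y) :
    ENNReal.ofReal (|f t x - f t y| / dist x y ^ α) ≤ pNorm T α f :=
  calc ENNReal.ofReal (|f t x - f t y| / dist x y ^ α) ≤ hSemi α (f t) :=
      le_iSup_of_le x (le_iSup_of_le y (le_iSup_of_le hxy le_rfl))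
    _ ≤ hNorm α (f t) := le_add_self
    _ ≤ pCTC T α f := le_iSup₂ (f := fun t (_ : t ∈ Set.Icc (0:ℝ) T) => hNorm α (f t)) t ht
    _ ≤ pNorm T α f := le_self_add

lemma le_pNorm_time {s t : ℝ} (hs : s ∈ Set.Icc (0:ℝ) T) (ht : t ∈ Set.Icc (0:ℝ) T)
    (hst : s ≠ t) (x : X) :
    ENNReal.ofReal (|f t x - f s x| / |t - s| ^ (α / 2)) ≤ pNorm T α f :=
  calc ENNReal.ofReal (|f t x - f s x| / |t - s| ^ (α / 2)) ≤ pHold T α f :=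
      le_iSup_of_le s (le_iSup_of_le hs (le_iSup_of_le t (le_iSup_of_le ht
        (le_iSup_of_le hst (le_iSup_of_le x le_rfl)))))
    _ ≤ pNorm T α f := le_add_self

lemma bnd_sup (hf : pNorm T α f ≠ ⊤) {t : ℝ} (ht : t ∈ Set.Icc (0:ℝ) T) (x : X) :
    |f t x| ≤ (pNorm T α f).toReal :=
  le_toReal_of_ofReal_le (abs_nonneg _) (le_pNorm_sup ht x) hf

lemma bnd_space (hf : pNorm T α f ≠ ⊤) {t : ℝ} (ht : t ∈ Set.Icc (0:ℝ) T) (x y : X) :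
    |f t x - f t y| ≤ (pNorm T α f).toReal * dist x y ^ α := by
  rcases eq_or_ne x y with rfl | hxy
  · simp only [sub_self, abs_zero]
    exact mul_nonneg ENNReal.toReal_nonneg (Real.rpow_nonneg dist_nonneg _)
  · have hd : (0:ℝ) < dist x y ^ α := Real.rpow_pos_of_pos (dist_pos.2 hxy) _
    have := le_toReal_of_ofReal_le (div_nonneg (abs_nonneg _) hd.le)
      (le_pNorm_space ht hxy) hf
    calc |f t x - f t y| = (|f t x - f t y| / dist x y ^ α) * dist x y ^ α :=
          (div_mul_cancel₀ _ hd.ne').symm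
      _ ≤ (pNorm T α f).toReal * dist x y ^ α := by gcongr

lemma bnd_time (hf : pNorm T α f ≠ ⊤) {s t : ℝ} (hs : s ∈ Set.Icc (0:ℝ) T)
    (ht : t ∈ Set.Icc (0:ℝ) T) (x : X) :
    |f t x - f s x| ≤ (pNorm T α f).toReal * |t - s| ^ (α / 2) := by
  rcases eq_or_ne s t with rfl | hst
  · simpa using mul_nonneg ENNReal.toReal_nonneg (Real.rpow_nonneg le_rfl (α/2))
  · have hd : (0:ℝ) < |t - s| ^ (α/2) :=
      Real.rpow_pos_of_pos (abs_pos.2 (sub_ne_zero.2 (Ne.symm hst))) _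
    have := le_toReal_of_ofReal_le (div_nonneg (abs_nonneg _) hd.le)
      (le_pNorm_time hs ht hst x) hf
    calc |f t x - f s x| = (|f t x - f s x| / |t - s| ^ (α/2)) * |t - s| ^ (α/2) :=
          (div_mul_cancel₀ _ hd.ne').symm
      _ ≤ (pNorm T α f).toReal * |t - s| ^ (α/2) := by gcongr

lemma supN_bnd {g : ℝ → ℝ} (h : supN g ≠ ⊤) (z : ℝ) : |g z| ≤ (supN g).toReal :=
  le_toReal_of_ofReal_le (abs_nonneg _)
    (le_iSup (fun z => ENNReal.ofReal |g z|) z) h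

lemma pNorm_zero_fn : pNorm T α (fun (_ : ℝ) (_ : X) => (0:ℝ)) = 0 := by
  simp [pNorm, pCTC, pHold, hNorm, supN, hSemi]

end extract


set_option maxHeartbeats 1000000 in
theorem stmt_3 (α β : ℝ) (hβ0 : 0 < β) (hβα : β ≤ α) (hα1 : α ≤ 1) :
    ∃ C : ℝ, 0 < C ∧
      ∀ (X : Type*) [MetricSpace X] (T : ℝ), 0 < T → T ≤ 1 →
        ∀ g : ℝ → ℝ, Differentiable ℝ g → Differentiable ℝ (deriv g) →
          supN g < ⊤ → supN (deriv g) < ⊤ → supN (deriv (deriv g)) < ⊤ →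
            ∀ u v : ℝ → X → ℝ, pNorm T α u < ⊤ → pNorm T α v < ⊤ →
              (∀ x : X, u 0 x = v 0 x) →
              pNorm T β (fun t x => g (u t x) - g (v t x)) ≤
                ENNReal.ofReal C * ENNReal.ofReal (T ^ ((α - β) / 2)) * c2Norm g *
                  (1 + pNorm T α u + pNorm T α v) *
                    pNorm T α (fun t x => u t x - v t x) := by
  refine ⟨5, by norm_num, ?_⟩
  intro X _ T hT0 hT1 g hg hg' hgb hg'b hg''b u v hu hv h0
  have hc2 : c2Norm g ≠ ⊤ := by
    have : c2Norm g < ⊤ := by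
      rw [c2Norm]
      exact ENNReal.add_lt_top.2 ⟨ENNReal.add_lt_top.2 ⟨hgb, hg'b⟩, hg''b⟩
    exact this.ne
  by_cases hδtop : pNorm T α (fun t x => u t x - v t x) = ⊤
  · by_cases hg0 : c2Norm g = 0
    · -- g is identically zero
      have hsg : supN g = 0 := by
        rw [c2Norm] at hg0
        exact ((add_eq_zero.1 ((add_eq_zero.1 hg0).1)).1)
      have hgzero : ∀ z : ℝ, g z = 0 := by
        intro z
        have h1 : ENNReal.ofReal |g z| ≤ 0 :=
          hsg ▸ le_iSup (fun z => ENNReal.ofReal |g z|) z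
        have h2 : ENNReal.ofReal |g z| = 0 := le_antisymm h1 zero_le
        rw [ENNReal.ofReal_eq_zero] at h2
        exact abs_eq_zero.1 (le_antisymm h2 (abs_nonneg _))
      have hfz : (fun (t:ℝ) (x:X) => g (u t x) - g (v t x)) = fun _ _ => (0:ℝ) := by
        funext t x; simp [hgzero]
      rw [hfz, pNorm_zero_fn]
      exact zero_le
    · rw [hδtop, ENNReal.mul_top]
      · exact le_top
      · refine mul_ne_zero (mul_ne_zero (mul_ne_zero ?_ ?_) hg0) ?_
        · exact (ENNReal.ofReal_pos.2 (by norm_num)).ne'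
        · exact (ENNReal.ofReal_pos.2 (Real.rpow_pos_of_pos hT0 _)).ne'
        · have h1 : (1:ℝ≥0∞) ≤ 1 + pNorm T α u + pNorm T α v :=
            le_trans le_self_add (le_self_add)
          exact (zero_lt_one.trans_le h1).ne'
  · -- main case
    have hαpos : 0 < α := lt_of_lt_of_le hβ0 hβα
    set K : ℝ := (c2Norm g).toReal with hKdef
    set B : ℝ := (pNorm T α v).toReal with hBdef
    set D : ℝ := (pNorm T α (fun t x => u t x - v t x)).toReal with hDdef
    set τ : ℝ := T ^ ((α - β) / 2) with hτdef
    have hKnn : 0 ≤ K := ENNReal.toReal_nonneg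
    have hBnn : 0 ≤ B := ENNReal.toReal_nonneg
    have hDnn : 0 ≤ D := ENNReal.toReal_nonneg
    have hτpos : 0 < τ := Real.rpow_pos_of_pos hT0 _
    have hK' : ∀ z, |deriv g z| ≤ K := by
      intro z
      refine (supN_bnd hg'b.ne z).trans (ENNReal.toReal_mono hc2 ?_)
      exact le_trans le_add_self (le_self_add : supN g + supN (deriv g) ≤ c2Norm g)
    have hK'' : ∀ z, |deriv (deriv g) z| ≤ K := by
      intro z
      exact (supN_bnd hg''b.ne z).trans (ENNReal.toReal_mono hc2 le_add_self)
    have hTα : T ^ (α/2) ≤ τ :=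
      Real.rpow_le_rpow_of_exponent_ge hT0 hT1 (by linarith)
    have hTα1 : T ^ (α/2) ≤ 1 := Real.rpow_le_one hT0.le hT1 (by linarith)
    have h0mem : (0:ℝ) ∈ Set.Icc (0:ℝ) T := ⟨le_rfl, hT0.le⟩
    -- F1 : smallness of u - v in sup norm
    have F1 : ∀ t ∈ Set.Icc (0:ℝ) T, ∀ x : X, |u t x - v t x| ≤ D * T ^ (α/2) := by
      intro t ht x
      have hb : |(u t x - v t x) - (u 0 x - v 0 x)| ≤ D * |t - 0| ^ (α/2) :=
        bnd_time hδtop h0mem ht x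
      rw [h0 x, sub_self, sub_zero, sub_zero, abs_of_nonneg ht.1] at hb
      refine hb.trans ?_
      gcongr
      · exact ht.1
      · exact ht.2
    have F2 : ∀ t ∈ Set.Icc (0:ℝ) T, ∀ x : X,
        |g (u t x) - g (v t x)| ≤ K * (D * T ^ (α/2)) := by
      intro t ht x
      exact (lipR hg hK' _ _).trans (mul_le_mul_of_nonneg_left (F1 t ht x) hKnn)
    set E : ℝ := τ * (K * ((1 + B) * D)) with hEdef
    have hEnn : 0 ≤ E := by positivity
    -- the master pointwise bound from key_est
    have key : ∀ (a b c d : ℝ), |a - b| ≤ D * T ^ (α/2) → |c - d| ≤ D * T ^ (α/2) →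
        ∀ r : ℝ, 0 ≤ r → |(a-b) - (c-d)| ≤ D * r → |b - d| ≤ B * r →
        |(g a - g b) - (g c - g d)| ≤ (K*D + 2*K*D*B) * r := by
      intro a b c d hab hcd r hr h1 h2
      have h3 := key_est hg hg' hK' hK'' a b c d
      have h4 : K * |(a-b)-(c-d)| ≤ K * (D * r) :=
        mul_le_mul_of_nonneg_left h1 hKnn
      have h5 : (|a - b| + |c - d|) * |b - d| ≤ (2 * (D * T^(α/2))) * (B * r) := by
        have habs : 0 ≤ |b - d| := abs_nonneg _
        have hDT : 0 ≤ D * T^(α/2) := le_trans (abs_nonneg _) hab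
        have := add_le_add hab hcd
        calc (|a - b| + |c - d|) * |b - d| ≤ (2 * (D * T^(α/2))) * |b - d| := by
              nlinarith
          _ ≤ (2 * (D * T^(α/2))) * (B * r) := by
              have h2nn : 0 ≤ 2 * (D * T^(α/2)) := by linarith
              exact mul_le_mul_of_nonneg_left h2 h2nn
        -- done
      have h6 : K * ((|a - b| + |c - d|) * |b - d|) ≤ K * ((2 * (D * T^(α/2))) * (B * r)) :=
        mul_le_mul_of_nonneg_left h5 hKnn
      have hTnn : 0 ≤ T ^ (α/2) := Real.rpow_nonneg hT0.le _
      calc |(g a - g b) - (g c - g d)| ≤ K * |(a-b)-(c-d)| + K * ((|a-b|+|c-d|)*|b-d|) := h3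
        _ ≤ K * (D * r) + K * ((2 * (D * T^(α/2))) * (B * r)) := add_le_add h4 h6
        _ ≤ (K*D + 2*K*D*B) * r := by nlinarith [mul_nonneg (mul_nonneg hKnn hDnn) (mul_nonneg hBnn hr)]
    have hC1nn : 0 ≤ K*D + 2*K*D*B := by positivity
    have hC1E : (K*D + 2*K*D*B) * τ ≤ 2 * E := by
      rw [hEdef]; nlinarith [mul_nonneg (mul_nonneg hτpos.le hKnn) hDnn]
    -- sup estimate
    have est_sup : ∀ t ∈ Set.Icc (0:ℝ) T, ∀ x : X, |g (u t x) - g (v t x)| ≤ E := by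
      intro t ht x
      refine (F2 t ht x).trans ?_
      rw [hEdef]
      nlinarith [mul_nonneg hKnn hDnn, hTα, mul_nonneg (mul_nonneg hKnn hDnn) hτpos.le]
    -- spatial estimate
    have est_space : ∀ t ∈ Set.Icc (0:ℝ) T, ∀ x y : X, x ≠ y →
        |(g (u t x) - g (v t x)) - (g (u t y) - g (v t y))| / dist x y ^ β ≤ 2 * E := by
      intro t ht x y hxy
      have hd : (0:ℝ) < dist x y := dist_pos.2 hxy
      have hdβ : (0:ℝ) < dist x y ^ β := Real.rpow_pos_of_pos hd _
      rw [div_le_iff₀ hdβ]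
      by_cases hc : dist x y ≤ T ^ (1/2 : ℝ)
      · -- small distance
        have hw : |(g (u t x) - g (v t x)) - (g (u t y) - g (v t y))| ≤
            (K*D + 2*K*D*B) * dist x y ^ α := by
          refine key _ _ _ _ (F1 t ht x) (F1 t ht y) _ (Real.rpow_nonneg hd.le _) ?_ ?_
          · have := bnd_space hδtop ht x y
            exact this
          · exact bnd_space hv.ne ht x y
        have hsplit : dist x y ^ α = dist x y ^ β * dist x y ^ (α - β) := by
          rw [← Real.rpow_add hd]; congr 1; ring
        have hdd : dist x y ^ (α - β) ≤ τ := by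
          calc dist x y ^ (α - β) ≤ (T ^ (1/2:ℝ)) ^ (α - β) :=
                Real.rpow_le_rpow hd.le hc (by linarith)
            _ = τ := by
                rw [hτdef, ← Real.rpow_mul hT0.le]
                congr 1; ring
        calc |(g (u t x) - g (v t x)) - (g (u t y) - g (v t y))|
            ≤ (K*D + 2*K*D*B) * (dist x y ^ β * dist x y ^ (α-β)) := by rw [← hsplit]; exact hw
          _ ≤ (K*D + 2*K*D*B) * (dist x y ^ β * τ) :=
              mul_le_mul_of_nonneg_left (mul_le_mul_of_nonneg_left hdd hdβ.le) hC1nn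
          _ = ((K*D + 2*K*D*B) * τ) * dist x y ^ β := by ring
          _ ≤ 2 * E * dist x y ^ β := mul_le_mul_of_nonneg_right hC1E hdβ.le
      · -- large distance
        push_neg at hc
        have hdb2 : T ^ (β/2) ≤ dist x y ^ β := by
          calc T ^ (β/2) = (T ^ (1/2:ℝ)) ^ β := by
                rw [← Real.rpow_mul hT0.le]; congr 1; ring
            _ ≤ dist x y ^ β := Real.rpow_le_rpow (Real.rpow_nonneg hT0.le _) hc.le hβ0.le
        have hsup : |(g (u t x) - g (v t x)) - (g (u t y) - g (v t y))| ≤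
            2 * (K * (D * T ^ (α/2))) := by
          have h1 := F2 t ht x
          have h2 := F2 t ht y
          calc |(g (u t x) - g (v t x)) - (g (u t y) - g (v t y))| ≤
              |g (u t x) - g (v t x)| + |g (u t y) - g (v t y)| := abs_sub _ _
            _ ≤ 2 * (K * (D * T ^ (α/2))) := by linarith
        have hττ : τ * T ^ (β/2) = T ^ (α/2) := by
          rw [hτdef, ← Real.rpow_add hT0]; congr 1; ring
        refine hsup.trans ?_
        have hKDτ : (0:ℝ) ≤ 2 * (K * D * τ) := by positivity
        calc 2 * (K * (D * T ^ (α/2))) = 2 * (K * D * τ) * T ^ (β/2) := by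
              rw [← hττ]; ring
          _ ≤ 2 * (K * D * τ) * dist x y ^ β := mul_le_mul_of_nonneg_left hdb2 hKDτ
          _ ≤ 2 * E * dist x y ^ β := by
              refine mul_le_mul_of_nonneg_right ?_ hdβ.le
              rw [hEdef]
              nlinarith [mul_nonneg (mul_nonneg (mul_nonneg hτpos.le hKnn) hDnn) hBnn]
    -- time estimate
    have est_time : ∀ s ∈ Set.Icc (0: ℝ) T, ∀ t ∈ Set.Icc (0:ℝ) T, s ≠ t → ∀ x : X,
        |(g (u t x) - g (v t x)) - (g (u s x) - g (v s x))| / |t - s| ^ (β/2) ≤ 2 * E := by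
      intro s hs t ht hst x
      have hρ : (0:ℝ) < |t - s| := abs_pos.2 (sub_ne_zero.2 (Ne.symm hst))
      have hρT : |t - s| ≤ T := by
        rw [abs_le]
        constructor <;> [linarith [ht.1, hs.2]; linarith [ht.2, hs.1]]
      have hρβ : (0:ℝ) < |t - s| ^ (β/2) := Real.rpow_pos_of_pos hρ _
      rw [div_le_iff₀ hρβ]
      have hw : |(g (u t x) - g (v t x)) - (g (u s x) - g (v s x))| ≤
          (K*D + 2*K*D*B) * |t - s| ^ (α/2) := by
        refine key _ _ _ _ (F1 t ht x) (F1 s hs x) _ (Real.rpow_nonneg hρ.le _) ?_ ?_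
        · exact bnd_time hδtop hs ht x
        · exact bnd_time hv.ne hs ht x
      have hsplit : |t - s| ^ (α/2) = |t - s| ^ (β/2) * |t - s| ^ ((α-β)/2) := by
        rw [← Real.rpow_add hρ]; congr 1; ring
      have hdd : |t - s| ^ ((α-β)/2) ≤ τ :=
        Real.rpow_le_rpow hρ.le hρT (by linarith)
      calc |(g (u t x) - g (v t x)) - (g (u s x) - g (v s x))|
          ≤ (K*D + 2*K*D*B) * (|t - s| ^ (β/2) * |t - s| ^ ((α-β)/2)) := by
            rw [← hsplit]; exact hw
        _ ≤ (K*D + 2*K*D*B) * (|t - s| ^ (β/2) * τ) :=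
            mul_le_mul_of_nonneg_left (mul_le_mul_of_nonneg_left hdd hρβ.le) hC1nn
        _ = ((K*D + 2*K*D*B) * τ) * |t - s| ^ (β/2) := by ring
        _ ≤ 2 * E * |t - s| ^ (β/2) := mul_le_mul_of_nonneg_right hC1E hρβ.le
    -- assemble the ENNReal bounds
    have hctc : pCTC T β (fun t x => g (u t x) - g (v t x)) ≤
        ENNReal.ofReal E + ENNReal.ofReal (2*E) := by
      refine iSup₂_le fun t ht => ?_
      rw [hNorm]
      refine add_le_add ?_ ?_
      · exact iSup_le fun x => ENNReal.ofReal_le_ofReal (est_sup t ht x)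
      · refine iSup_le fun x => iSup_le fun y => iSup_le fun hxy => ?_
        exact ENNReal.ofReal_le_ofReal (est_space t ht x y hxy)
    have hhold : pHold T β (fun t x => g (u t x) - g (v t x)) ≤ ENNReal.ofReal (2*E) := by
      refine iSup₂_le fun s hs => iSup₂_le fun t ht => iSup_le fun hst => iSup_le fun x => ?_
      exact ENNReal.ofReal_le_ofReal (est_time s hs t ht hst x)
    have htot : pNorm T β (fun t x => g (u t x) - g (v t x)) ≤ ENNReal.ofReal (5*E) := by
      have h2Enn : (0:ℝ) ≤ 2*E := by linarith
      calc pNorm T β (fun t x => g (u t x) - g (v t x)) ≤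
          (ENNReal.ofReal E + ENNReal.ofReal (2*E)) + ENNReal.ofReal (2*E) :=
            add_le_add hctc hhold
        _ = ENNReal.ofReal (E + 2*E + 2*E) := by
            rw [ENNReal.ofReal_add (by linarith) h2Enn, ENNReal.ofReal_add hEnn h2Enn]
        _ = ENNReal.ofReal (5*E) := by congr 1; ring
    refine htot.trans ?_
    have hfivE : (5:ℝ)*E = ((((5*τ)*K)*(1+B))*D) := by rw [hEdef]; ring
    have h5τnn : (0:ℝ) ≤ 5*τ := by linarith
    have h5τKnn : (0:ℝ) ≤ (5*τ)*K := by positivity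
    have h5τK1Bnn : (0:ℝ) ≤ ((5*τ)*K)*(1+B) := by positivity
    rw [hfivE, ENNReal.ofReal_mul h5τK1Bnn, ENNReal.ofReal_mul h5τKnn,
      ENNReal.ofReal_mul h5τnn, ENNReal.ofReal_mul (by norm_num : (0:ℝ) ≤ 5)]
    rw [hKdef, ENNReal.ofReal_toReal hc2, hDdef, ENNReal.ofReal_toReal hδtop]
    have h1B : ENNReal.ofReal (1+B) ≤ 1 + pNorm T α u + pNorm T α v := by
      rw [ENNReal.ofReal_add (by norm_num) hBnn, ENNReal.ofReal_one, hBdef,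
        ENNReal.ofReal_toReal hv.ne, add_assoc]
      exact add_le_add_right le_add_self 1
    exact mul_le_mul_left (mul_le_mul_right h1B _) _
end

section
/- Let X be a metric space, let 0 < β ≤ α ≤ 1 and T ∈ (0,1], and set ε := β/α. Let h : [0,T] × X → ℝ satisfy ‖h‖_{C_T C^α} < ∞ and ‖h‖_{C_T^{α/2} L^∞} < ∞. Then there is a constant C depending only on α and β such that ‖h‖_{C_T C^β} ≤ C ( T^{(α−β)/2} ‖h‖_{C_T C^α}^{ε} ‖h‖_{C_T^{α/2} L^∞}^{1−ε} + ‖h(0,·)‖_{C^β} ). -/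
open scoped ENNReal

private lemma interp_min {u a b ε : ℝ} (hu : 0 ≤ u) (ha : u ≤ a) (hb : u ≤ b)
    (hε0 : 0 ≤ ε) (hε1 : ε ≤ 1) : u ≤ a ^ ε * b ^ (1 - ε) := by
  have ha0 : 0 ≤ a := hu.trans ha
  have hb0 : 0 ≤ b := hu.trans hb
  rcases eq_or_lt_of_le hu with h | h
  · have : (0:ℝ) ≤ a ^ ε * b ^ (1 - ε) :=
      mul_nonneg (Real.rpow_nonneg ha0 _) (Real.rpow_nonneg hb0 _)
    linarith
  · calc u = u ^ ε * u ^ (1 - ε) := by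
          rw [← Real.rpow_add h]; norm_num
      _ ≤ a ^ ε * b ^ (1 - ε) :=
          mul_le_mul (Real.rpow_le_rpow hu ha hε0) (Real.rpow_le_rpow hu hb (by linarith))
            (Real.rpow_nonneg hu _) (Real.rpow_nonneg ha0 _)

theorem stmt_4 (α β : ℝ) (hβ0 : 0 < β) (hβα : β ≤ α) (hα1 : α ≤ 1) :
    ∃ C : ℝ, 0 < C ∧
      ∀ (X : Type*) [MetricSpace X] (T : ℝ), 0 < T → T ≤ 1 →
        ∀ h : ℝ → X → ℝ, pCTC T α h < ⊤ → pHold T α h < ⊤ →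
          pCTC T β h ≤
            ENNReal.ofReal C *
              (ENNReal.ofReal (T ^ ((α - β) / 2)) *
                  (pCTC T α h) ^ (β / α) * (pHold T α h) ^ (1 - β / α)
                + hNorm β (h 0)) := by
  have hα0 : 0 < α := lt_of_lt_of_le hβ0 hβα
  set ε := β / α with hεdef
  have hε0 : 0 < ε := div_pos hβ0 hα0
  have hε1 : ε ≤ 1 := (div_le_one hα0).2 hβα
  have hαε : α * ε = β := by rw [hεdef]; field_simp
  refine ⟨4, by norm_num, ?_⟩
  intro X _ T hT0 hT1 h hAE hBE
  set AE := pCTC T α h with hAEdef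
  set BE := pHold T α h with hBEdef
  set A := AE.toReal with hAdef
  set B := BE.toReal with hBdef
  have hA0 : 0 ≤ A := ENNReal.toReal_nonneg
  have hB0 : 0 ≤ B := ENNReal.toReal_nonneg
  -- pointwise bounds from finiteness
  have hnorm_le : ∀ t ∈ Set.Icc (0:ℝ) T, hNorm α (h t) ≤ AE := by
    intro t ht
    exact le_iSup₂ (f := fun t (_ : t ∈ Set.Icc (0:ℝ) T) => hNorm α (h t)) t ht
  have hbound1 : ∀ t ∈ Set.Icc (0:ℝ) T, ∀ x : X, |h t x| ≤ A := by
    intro t ht x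
    refine (ENNReal.ofReal_le_iff_le_toReal hAE.ne).1 ?_
    refine le_trans ?_ (hnorm_le t ht)
    exact le_trans (le_iSup (fun x => ENNReal.ofReal |h t x|) x) le_self_add
  have hbound2 : ∀ t ∈ Set.Icc (0:ℝ) T, ∀ x y : X, x ≠ y →
      |h t x - h t y| ≤ A * dist x y ^ α := by
    intro t ht x y hxy
    have hd : (0:ℝ) < dist x y := dist_pos.2 hxy
    have hdα : (0:ℝ) < dist x y ^ α := Real.rpow_pos_of_pos hd α
    rw [← div_le_iff₀ hdα]
    refine (ENNReal.ofReal_le_iff_le_toReal hAE.ne).1 ?_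
    refine le_trans ?_ (hnorm_le t ht)
    refine le_trans ?_ le_add_self
    exact le_iSup₂_of_le x y (le_iSup_of_le hxy le_rfl)
  have hbound3 : ∀ s ∈ Set.Icc (0:ℝ) T, ∀ t ∈ Set.Icc (0:ℝ) T, ∀ x : X,
      |h t x - h s x| ≤ B * |t - s| ^ (α / 2) := by
    intro s hs t ht x
    rcases eq_or_ne s t with rfl | hst
    · simp [Real.zero_rpow (by positivity : α / 2 ≠ 0)]
    have hts : (0:ℝ) < |t - s| := by
      rw [abs_pos, sub_ne_zero]; exact fun e => hst e.symm
    have hp : (0:ℝ) < |t - s| ^ (α / 2) := Real.rpow_pos_of_pos hts _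
    rw [← div_le_iff₀ hp]
    refine (ENNReal.ofReal_le_iff_le_toReal hBE.ne).1 ?_
    exact le_iSup₂_of_le s hs <| le_iSup₂_of_le t ht <| le_iSup₂_of_le hst x le_rfl
  -- the interpolation constant
  set K : ℝ := T ^ ((α - β) / 2) * A ^ ε * B ^ (1 - ε) with hKdef
  have hK0 : 0 ≤ K := by positivity
  have h0T : (0:ℝ) ∈ Set.Icc (0:ℝ) T := ⟨le_rfl, hT0.le⟩
  -- time increment bound
  have hg : ∀ t ∈ Set.Icc (0:ℝ) T, ∀ x : X, |h t x - h 0 x| ≤ B * T ^ (α / 2) := by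
    intro t ht x
    refine (hbound3 0 h0T t ht x).trans ?_
    have : |t - 0| ^ (α / 2) ≤ T ^ (α / 2) := by
      rw [sub_zero, abs_of_nonneg ht.1]
      exact Real.rpow_le_rpow ht.1 ht.2 (by positivity)
    exact mul_le_mul_of_nonneg_left this hB0
  -- key exponent identity
  have hexp : α / 2 * (1 - ε) = (α - β) / 2 := by
    have : α * ε = β := hαε
    nlinarith [this]
  -- sup-norm interpolation
  have key1 : ∀ t ∈ Set.Icc (0:ℝ) T, ∀ x : X, |h t x - h 0 x| ≤ 2 * K := by
    intro t ht x
    have h1 : |h t x - h 0 x| ≤ 2 * A := by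
      have := hbound1 t ht x
      have := hbound1 0 h0T x
      calc |h t x - h 0 x| ≤ |h t x| + |h 0 x| := abs_sub _ _
        _ ≤ 2 * A := by linarith
    have h2 := hg t ht x
    have h3 : |h t x - h 0 x| ≤ (2 * A) ^ ε * (B * T ^ (α / 2)) ^ (1 - ε) :=
      interp_min (abs_nonneg _) h1 h2 hε0.le hε1
    refine h3.trans ?_
    have e1 : (2 * A) ^ ε = 2 ^ ε * A ^ ε := Real.mul_rpow (by norm_num) hA0
    have e2 : (B * T ^ (α / 2)) ^ (1 - ε) = B ^ (1 - ε) * T ^ ((α - β) / 2) := by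
      rw [Real.mul_rpow hB0 (Real.rpow_nonneg hT0.le _), ← Real.rpow_mul hT0.le, hexp]
    have e3 : (2:ℝ) ^ ε ≤ 2 := by
      calc (2:ℝ) ^ ε ≤ 2 ^ (1:ℝ) := Real.rpow_le_rpow_of_exponent_le one_le_two hε1
        _ = 2 := Real.rpow_one 2
    rw [e1, e2, hKdef]
    have hAε : (0:ℝ) ≤ A ^ ε := Real.rpow_nonneg hA0 _
    have hBε : (0:ℝ) ≤ B ^ (1 - ε) := Real.rpow_nonneg hB0 _
    have hTε : (0:ℝ) ≤ T ^ ((α - β) / 2) := Real.rpow_nonneg hT0.le _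
    calc 2 ^ ε * A ^ ε * (B ^ (1 - ε) * T ^ ((α - β) / 2))
        ≤ 2 * A ^ ε * (B ^ (1 - ε) * T ^ ((α - β) / 2)) := by
          apply mul_le_mul_of_nonneg_right (mul_le_mul_of_nonneg_right e3 hAε) (by positivity)
      _ = 2 * (T ^ ((α - β) / 2) * A ^ ε * B ^ (1 - ε)) := by ring
  -- seminorm interpolation
  have key2 : ∀ t ∈ Set.Icc (0:ℝ) T, ∀ x y : X, x ≠ y →
      |h t x - h t y| / dist x y ^ β ≤ |h 0 x - h 0 y| / dist x y ^ β + 2 * K := by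
    intro t ht x y hxy
    have hd : (0:ℝ) < dist x y := dist_pos.2 hxy
    have hdβ : (0:ℝ) < dist x y ^ β := Real.rpow_pos_of_pos hd β
    set u := |(h t x - h 0 x) - (h t y - h 0 y)| with hudef
    have htri : |h t x - h t y| ≤ |h 0 x - h 0 y| + u := by
      rw [hudef]
      have : h t x - h t y = (h 0 x - h 0 y) + ((h t x - h 0 x) - (h t y - h 0 y)) := by ring
      rw [this]
      exact abs_add_le _ _
    have hu1 : u ≤ 2 * A * dist x y ^ α := by
      have h1 := hbound2 t ht x y hxy
      have h2 := hbound2 0 h0T x y hxy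
      calc u ≤ |h t x - h t y| + |h 0 x - h 0 y| := by
            rw [hudef]
            have : (h t x - h 0 x) - (h t y - h 0 y) = (h t x - h t y) - (h 0 x - h 0 y) := by ring
            rw [this]; exact abs_sub _ _
        _ ≤ 2 * A * dist x y ^ α := by linarith
    have hu2 : u ≤ 2 * (B * T ^ (α / 2)) := by
      calc u ≤ |h t x - h 0 x| + |h t y - h 0 y| := abs_sub _ _
        _ ≤ 2 * (B * T ^ (α / 2)) := by linarith [hg t ht x, hg t ht y]
    have h3 : u ≤ (2 * A * dist x y ^ α) ^ ε * (2 * (B * T ^ (α / 2))) ^ (1 - ε) :=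
      interp_min (abs_nonneg _) hu1 hu2 hε0.le hε1
    have e1 : (2 * A * dist x y ^ α) ^ ε = 2 ^ ε * A ^ ε * dist x y ^ β := by
      rw [Real.mul_rpow (by positivity) (Real.rpow_nonneg hd.le _),
        Real.mul_rpow (by norm_num) hA0, ← Real.rpow_mul hd.le, hαε]
    have e2 : (2 * (B * T ^ (α / 2))) ^ (1 - ε)
        = 2 ^ (1 - ε) * (B ^ (1 - ε) * T ^ ((α - β) / 2)) := by
      rw [Real.mul_rpow (by norm_num) (by positivity),
        Real.mul_rpow hB0 (Real.rpow_nonneg hT0.le _), ← Real.rpow_mul hT0.le, hexp]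
    have e3 : (2:ℝ) ^ ε * 2 ^ (1 - ε) = 2 := by
      rw [← Real.rpow_add (by norm_num)]; norm_num
    have h4 : u ≤ 2 * K * dist x y ^ β := by
      refine h3.trans ?_
      rw [e1, e2, hKdef]
      have : 2 ^ ε * A ^ ε * dist x y ^ β * (2 ^ (1 - ε) * (B ^ (1 - ε) * T ^ ((α - β) / 2)))
          = (2 ^ ε * 2 ^ (1 - ε)) * (T ^ ((α - β) / 2) * A ^ ε * B ^ (1 - ε)) * dist x y ^ β := by
        ring
      rw [this, e3]
    calc |h t x - h t y| / dist x y ^ β ≤ (|h 0 x - h 0 y| + u) / dist x y ^ β := by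
          gcongr
      _ = |h 0 x - h 0 y| / dist x y ^ β + u / dist x y ^ β := add_div _ _ _
      _ ≤ |h 0 x - h 0 y| / dist x y ^ β + 2 * K := by
          have : u / dist x y ^ β ≤ 2 * K := (div_le_iff₀ hdβ).2 h4
          linarith
  -- assemble ENNReal bound for each t
  have main : ∀ t ∈ Set.Icc (0:ℝ) T,
      hNorm β (h t) ≤ hNorm β (h 0) + ENNReal.ofReal (4 * K) := by
    intro t ht
    have hsup : supN (h t) ≤ supN (h 0) + ENNReal.ofReal (2 * K) := by
      refine iSup_le fun x => ?_
      have hr : |h t x| ≤ |h 0 x| + 2 * K := by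
        have := key1 t ht x
        have : |h t x| - |h 0 x| ≤ 2 * K := (abs_sub_abs_le_abs_sub _ _).trans this
        linarith
      calc ENNReal.ofReal |h t x| ≤ ENNReal.ofReal (|h 0 x| + 2 * K) :=
            ENNReal.ofReal_le_ofReal hr
        _ = ENNReal.ofReal |h 0 x| + ENNReal.ofReal (2 * K) :=
            ENNReal.ofReal_add (abs_nonneg _) (by linarith)
        _ ≤ supN (h 0) + ENNReal.ofReal (2 * K) :=
            add_le_add_left (le_iSup (fun x => ENNReal.ofReal |h 0 x|) x) _
    have hsemi : hSemi β (h t) ≤ hSemi β (h 0) + ENNReal.ofReal (2 * K) := by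
      refine iSup_le fun x => iSup_le fun y => iSup_le fun hxy => ?_
      have hr := key2 t ht x y hxy
      calc ENNReal.ofReal (|h t x - h t y| / dist x y ^ β)
          ≤ ENNReal.ofReal (|h 0 x - h 0 y| / dist x y ^ β + 2 * K) :=
            ENNReal.ofReal_le_ofReal hr
        _ = ENNReal.ofReal (|h 0 x - h 0 y| / dist x y ^ β) + ENNReal.ofReal (2 * K) :=
            ENNReal.ofReal_add (by positivity) (by linarith)
        _ ≤ hSemi β (h 0) + ENNReal.ofReal (2 * K) := by
            refine add_le_add_left ?_ _
            exact le_iSup₂_of_le x y (le_iSup_of_le hxy le_rfl)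
    calc hNorm β (h t) = supN (h t) + hSemi β (h t) := rfl
      _ ≤ (supN (h 0) + ENNReal.ofReal (2 * K)) + (hSemi β (h 0) + ENNReal.ofReal (2 * K)) :=
          add_le_add hsup hsemi
      _ = hNorm β (h 0) + ENNReal.ofReal (4 * K) := by
          rw [show (4:ℝ) * K = 2 * K + 2 * K by ring,
            ENNReal.ofReal_add (by linarith) (by linarith)]
          simp only [hNorm]
          ring
  -- identify the RHS product with ofReal K
  have hAEr : AE ^ ε = ENNReal.ofReal (A ^ ε) := by
    rw [hAdef, ENNReal.toReal_rpow,
      ENNReal.ofReal_toReal (ENNReal.rpow_ne_top_of_nonneg hε0.le hAE.ne)]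
  have hBEr : BE ^ (1 - ε) = ENNReal.ofReal (B ^ (1 - ε)) := by
    rw [hBdef, ENNReal.toReal_rpow,
      ENNReal.ofReal_toReal (ENNReal.rpow_ne_top_of_nonneg (by linarith) hBE.ne)]
  have hprod : ENNReal.ofReal (T ^ ((α - β) / 2)) * AE ^ ε * BE ^ (1 - ε)
      = ENNReal.ofReal K := by
    rw [hAEr, hBEr, ← ENNReal.ofReal_mul (Real.rpow_nonneg hT0.le _),
      ← ENNReal.ofReal_mul (by positivity), hKdef]
  -- finish
  refine iSup₂_le fun t ht => (main t ht).trans ?_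
  rw [hprod, mul_add]
  have h4 : ENNReal.ofReal 4 * ENNReal.ofReal K = ENNReal.ofReal (4 * K) := by
    rw [← ENNReal.ofReal_mul (by norm_num)]
  rw [h4, add_comm (hNorm β (h 0))]
  refine add_le_add le_rfl ?_
  exact le_mul_of_one_le_left zero_le (by
    rw [show (1:ℝ≥0∞) = ENNReal.ofReal 1 by simp]
    exact ENNReal.ofReal_le_ofReal (by norm_num))
end

section
/- Let d ≥ 1, T > 0 and λ > 0. Let a : ℝ → ℝ be continuous with a(r) ≥ λ for all r, let g : ℝ → ℝ and ζ : [0,T] × ℝ^d → ℝ. Let A : ℝ → ℝ be differentiable with A'(r) = 1/a(r) for all r, let b : ℝ → ℝ satisfy b(A(r)) = r for all r ∈ ℝ, and set f := (g/a) ∘ b. Suppose u : [0,T] × ℝ^d → ℝ is differentiable in the time variable and twice differentiable in the space variable and satisfies ∂_t u(t,x) = a(u(t,x)) Δu(t,x) + g(u(t,x)) ζ(t,x) for all (t,x) ∈ (0,T] × ℝ^d, where Δ denotes the spatial Laplacian (the sum of the second partial derivatives in the space variables). Then v := A ∘ u satisfies b(v(t,x)) = u(t,x) for all (t,x), v is differentiable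 in time, and ∂_t v(t,x) = Δ(b ∘ v)(t,x) + f(v(t,x)) ζ(t,x) for all (t,x) ∈ (0,T] × ℝ^d. -/
/-- The spatial Laplacian of `w : (Fin d → ℝ) → ℝ` at `x`: the sum of the second
partial derivatives in each coordinate direction. -/
noncomputable def lap {d : ℕ} (w : (Fin d → ℝ) → ℝ) (x : Fin d → ℝ) : ℝ :=
  ∑ i : Fin d, deriv (deriv fun s : ℝ => w (Function.update x i s)) (x i)

theorem stmt_6 (d : ℕ) (hd : 1 ≤ d) (T lam : ℝ) (hT : 0 < T) (hlam : 0 < lam)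
    (a g : ℝ → ℝ) (ha : Continuous a) (halam : ∀ r : ℝ, lam ≤ a r)
    (ζ : ℝ → (Fin d → ℝ) → ℝ)
    (A : ℝ → ℝ) (hA : Differentiable ℝ A) (hA' : ∀ r : ℝ, deriv A r = 1 / a r)
    (b : ℝ → ℝ) (hb : ∀ r : ℝ, b (A r) = r)
    (f : ℝ → ℝ) (hf : f = fun r => g (b r) / a (b r))
    (u : ℝ → (Fin d → ℝ) → ℝ)
    (hut : ∀ x, Differentiable ℝ fun t => u t x)
    (hux : ∀ t, ∀ x : Fin d → ℝ, ∀ i : Fin d,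
      Differentiable ℝ (fun s : ℝ => u t (Function.update x i s)) ∧
        Differentiable ℝ (deriv fun s : ℝ => u t (Function.update x i s)))
    (heq : ∀ t ∈ Set.Ioc (0 : ℝ) T, ∀ x,
      deriv (fun τ => u τ x) t = a (u t x) * lap (u t) x + g (u t x) * ζ t x)
    (v : ℝ → (Fin d → ℝ) → ℝ) (hv : v = fun t x => A (u t x)) :
    (∀ t x, b (v t x) = u t x) ∧
      (∀ x, Differentiable ℝ fun t => v t x) ∧
        (∀ t ∈ Set.Ioc (0 : ℝ) T, ∀ x,
          deriv (fun τ => v τ x) t = lap (fun y => b (v t y)) x + f (v t x) * ζ t x) := by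
  subst hv hf
  have hbv : ∀ t x, b (A (u t x)) = u t x := fun t x => hb _
  refine ⟨hbv, fun x => hA.comp (hut x), ?_⟩
  intro t ht x
  have hane : a (u t x) ≠ 0 := ne_of_gt (lt_of_lt_of_le hlam (halam _))
  have hlapeq : lap (fun y => b (A (u t y))) x = lap (u t) x := by
    congr 1
    funext y
    exact hb _
  have hd1 : deriv (fun τ => A (u τ x)) t
      = deriv A (u t x) * deriv (fun τ => u τ x) t := by
    exact deriv_comp (x := t) (hA _) ((hut x) t)
  rw [hd1, hA', heq t ht x]
  simp only [hbv, hlapeq]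
  field_simp
end
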